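/- arXiv:2407.03170 — 8 statements merged into one kernel-verified Lean document; each statement's English description precedes it below -/
import Mathlib

section
/- Let p be an odd prime, n ≥ 1, and 1 ≤ i ≤ ⌊n/2⌋ with n/gcd(n,i) odd. Then the monomial F(x) = x^{p^i + 1} is planar over F_{p^n}. -/
/-- Geometric sum identity over ℕ. -/
private lemma geom_sum_nat (x : ℕ) (hx : 1 ≤ x) (m : ℕ) :
    (x - 1) * ∑ j ∈ Finset.range m, x ^ j = x ^ m - 1 := by
  induction m with
  | zero => simp
  | succ m ih =>
    rw [Finset.sum_range_succ, Nat.mul_add, ih, pow_succ]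
    have h1 : 1 ≤ x ^ m := Nat.one_le_pow _ _ hx
    have h2 : x ^ m ≤ x ^ m * x := Nat.le_mul_of_pos_right _ hx
    have h3 : (x - 1) * x ^ m = x ^ m * x - x ^ m := by
      rw [Nat.sub_mul, one_mul, mul_comm]
    rw [h3]
    omega

/-- The key arithmetic fact: `(p^n - 1) / gcd (p^i - 1) (p^n - 1)` is odd. -/
private lemma odd_div_gcd (p n i : ℕ) (hp : Odd p) (hp3 : 3 ≤ p) (hn : 1 ≤ n) (hi1 : 1 ≤ i)
    (hodd : Odd (n / Nat.gcd n i)) :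
    Odd ((p ^ n - 1) / Nat.gcd (p ^ i - 1) (p ^ n - 1)) := by
  set e := Nat.gcd n i with he
  set m := n / e with hm
  have he_pos : 0 < e := Nat.gcd_pos_of_pos_left i (by omega)
  have hen : e ∣ n := Nat.gcd_dvd_left n i
  have hei : e ∣ i := Nat.gcd_dvd_right n i
  have hpe1 : 1 ≤ p ^ e := Nat.one_le_pow _ _ (by omega)
  have hpn3 : 3 ≤ p ^ n := le_trans hp3 (Nat.le_self_pow (by omega) p)
  -- p^e - 1 divides p^i - 1 and p^n - 1
  have hdvd_i : p ^ e - 1 ∣ p ^ i - 1 := by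
    have := Nat.sub_dvd_pow_sub_pow (p ^ e) 1 (i / e)
    rwa [one_pow, ← pow_mul, Nat.mul_div_cancel' hei] at this
  have hdvd_n : p ^ e - 1 ∣ p ^ n - 1 := by
    have := Nat.sub_dvd_pow_sub_pow (p ^ e) 1 (n / e)
    rwa [one_pow, ← pow_mul, Nat.mul_div_cancel' hen] at this
  set g := Nat.gcd (p ^ i - 1) (p ^ n - 1) with hg
  have hdvd_g : p ^ e - 1 ∣ g := Nat.dvd_gcd hdvd_i hdvd_n
  have hgN : g ∣ p ^ n - 1 := Nat.gcd_dvd_right _ _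
  have hg_pos : 0 < g := Nat.gcd_pos_of_pos_right _ (by omega)
  -- the quotient (p^n-1)/(p^e-1) is the geometric sum, which is odd
  have hsum : (p ^ e - 1) * ∑ j ∈ Finset.range m, (p ^ e) ^ j = p ^ n - 1 := by
    rw [geom_sum_nat _ hpe1, ← pow_mul, Nat.mul_div_cancel' hen]
  have hpe_pos : 0 < p ^ e - 1 := by
    have : 3 ≤ p ^ e := le_trans hp3 (Nat.le_self_pow (by omega) p)
    omega
  have hSodd : Odd (∑ j ∈ Finset.range m, (p ^ e) ^ j) := by
    have hterm : ∀ j ∈ Finset.range m, (p ^ e) ^ j % 2 = 1 := fun j _ =>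
      Nat.odd_iff.mp (hp.pow.pow)
    rw [Nat.odd_iff, Finset.sum_nat_mod, Finset.sum_congr rfl hterm, Finset.sum_const,
      Finset.card_range, smul_eq_mul, mul_one]
    have := Nat.odd_iff.mp hodd
    omega
  -- (p^n-1)/g is a divisor of the odd geometric sum
  obtain ⟨k, hk⟩ := hdvd_g
  obtain ⟨l, hl⟩ := hgN
  have hS : ∑ j ∈ Finset.range m, (p ^ e) ^ j = k * l := by
    have heq : (p ^ e - 1) * ∑ j ∈ Finset.range m, (p ^ e) ^ j = (p ^ e - 1) * (k * l) := by
      rw [hsum, hl, hk]; ring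
    exact Nat.eq_of_mul_eq_mul_left hpe_pos heq
  have hquot : (p ^ n - 1) / g = l := by
    rw [hl]; exact Nat.mul_div_cancel_left l hg_pos
  rw [hquot]
  rw [hS] at hSodd
  exact (Nat.odd_mul.mp hSodd).2

/-- Albert's twisted fields: `x^(p^i+1)` is planar over `F_{p^n}` when
`n / gcd(n,i)` is odd. -/
theorem albert_monomial_planar (p : ℕ) [Fact p.Prime] (hp : Odd p)
    (n i : ℕ) (hn : 1 ≤ n) (hi1 : 1 ≤ i) (hi2 : i ≤ n / 2)
    (hodd : Odd (n / Nat.gcd n i)) :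
    ∀ a : GaloisField p n, a ≠ 0 →
      Function.Bijective
        (fun x : GaloisField p n => (x + a) ^ (p ^ i + 1) - x ^ (p ^ i + 1)) := by
  intro a ha
  haveI : Fintype (GaloisField p n) := Fintype.ofFinite _
  have hprime := (Fact.out : p.Prime)
  have hp3 : 3 ≤ p := by
    have h2 : 2 ≤ p := hprime.two_le
    have := Nat.odd_iff.mp hp
    omega
  haveI : Fact (2 < p) := ⟨by omega⟩
  have hne : (-1 : GaloisField p n) ≠ 1 := CharP.neg_one_ne_one (GaloisField p n) p
  have hcard : Fintype.card (GaloisField p n) = p ^ n := by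
    rw [Fintype.card_eq_nat_card]; exact GaloisField.card p n (by omega)
  have hpi3 : 3 ≤ p ^ i := le_trans hp3 (Nat.le_self_pow (by omega) p)
  have hpn3 : 3 ≤ p ^ n := le_trans hp3 (Nat.le_self_pow (by omega) p)
  -- no element u satisfies u ^ (p^i - 1) = -1
  have key : ∀ u : GaloisField p n, u ≠ 0 → u ^ (p ^ i - 1) ≠ -1 := by
    intro u hu hur
    have huN : u ^ (p ^ n - 1) = 1 := by
      rw [← hcard]; exact FiniteField.pow_card_sub_one_eq_one u hu
    set g := Nat.gcd (p ^ i - 1) (p ^ n - 1) with hg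
    have hgr : g ∣ p ^ i - 1 := Nat.gcd_dvd_left _ _
    have hgN : g ∣ p ^ n - 1 := Nat.gcd_dvd_right _ _
    have hg_pos : 0 < g := Nat.gcd_pos_of_pos_right _ (by omega)
    -- Bezout
    set s := Nat.gcdA (p ^ i - 1) (p ^ n - 1) with hs
    set t := Nat.gcdB (p ^ i - 1) (p ^ n - 1) with ht
    have hbez : (g : ℤ) = (p ^ i - 1 : ℕ) * s + (p ^ n - 1 : ℕ) * t :=
      Nat.gcd_eq_gcd_ab (p ^ i - 1) (p ^ n - 1)
    have hug : u ^ (g : ℤ) = (-1 : GaloisField p n) ^ s := by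
      rw [hbez, zpow_add₀ hu, zpow_mul, zpow_mul, zpow_natCast, zpow_natCast, hur, huN,
        one_zpow, mul_one]
    have hugn : u ^ g = (-1 : GaloisField p n) ^ s := by rw [← hug, zpow_natCast]
    have hNg_odd : Odd ((p ^ n - 1) / g) := odd_div_gcd p n i hp hp3 hn hi1 hodd
    rcases Int.even_or_odd s with hpar | hpar
    · -- even case: u^g = 1, so u^(p^i-1) = 1, contradiction
      rw [hpar.neg_one_zpow] at hugn
      have h1 : u ^ (p ^ i - 1) = 1 := by
        rw [← Nat.mul_div_cancel' hgr, pow_mul, hugn, one_pow]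
      rw [hur] at h1
      exact hne h1
    · -- odd case: u^g = -1, so u^(p^n-1) = -1, contradiction
      rw [hpar.neg_one_zpow] at hugn
      have h1 : u ^ (p ^ n - 1) = -1 := by
        rw [← Nat.mul_div_cancel' hgN, pow_mul, hugn, hNg_odd.neg_one_pow]
      rw [huN] at h1
      exact hne h1.symm
  -- the difference function simplifies to an affine map
  have hfun : ∀ x : GaloisField p n,
      (x + a) ^ (p ^ i + 1) - x ^ (p ^ i + 1)
        = a * x ^ (p ^ i) + a ^ (p ^ i) * x + a ^ (p ^ i + 1) := by
    intro x
    have hfrob : (x + a) ^ (p ^ i) = x ^ (p ^ i) + a ^ (p ^ i) := add_pow_char_pow x a p i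
    calc (x + a) ^ (p ^ i + 1) - x ^ (p ^ i + 1)
        = (x + a) ^ (p ^ i) * (x + a) - x ^ (p ^ i + 1) := by rw [pow_succ]
      _ = (x ^ (p ^ i) + a ^ (p ^ i)) * (x + a) - x ^ (p ^ i + 1) := by rw [hfrob]
      _ = a * x ^ (p ^ i) + a ^ (p ^ i) * x + a ^ (p ^ i + 1) := by
          simp only [pow_succ]; ring
  -- injectivity
  have hinj : Function.Injective
      (fun x : GaloisField p n => (x + a) ^ (p ^ i + 1) - x ^ (p ^ i + 1)) := by
    intro x y hxy
    simp only [hfun] at hxy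
    have h0 : a * (x - y) ^ (p ^ i) + a ^ (p ^ i) * (x - y) = 0 := by
      rw [sub_pow_char_pow]
      linear_combination hxy
    by_contra hne2
    have hz : x - y ≠ 0 := sub_ne_zero_of_ne hne2
    obtain ⟨r, hqr⟩ : ∃ r, p ^ i = r + 1 := ⟨p ^ i - 1, by omega⟩
    rw [hqr] at h0
    have h1 : a * (x - y) * ((x - y) ^ r + a ^ r) = 0 := by
      rw [pow_succ, pow_succ] at h0
      linear_combination h0
    have h2 : (x - y) ^ r + a ^ r = 0 := by
      rcases mul_eq_zero.mp h1 with h | h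
      · exact absurd h (mul_ne_zero ha hz)
      · exact h
    have h3 : ((x - y) / a) ^ r = -1 := by
      rw [div_pow, eq_sub_of_add_eq h2, zero_sub, neg_div, div_self (pow_ne_zero r ha)]
    have hr' : p ^ i - 1 = r := by omega
    exact key ((x - y) / a) (div_ne_zero hz ha) (hr' ▸ h3)
  exact Finite.injective_iff_bijective.mp hinj
end

section
/- Let p be an odd prime, n ≥ 1, and i ≥ 1 such that n/gcd(n,i) is even. Then F(x) = x^{p^i+1} is not planar over F_{p^n}. -/
open Finset in
private lemma geom_nat (x m : ℕ) (hx : 1 ≤ x) :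
    (∑ j ∈ range m, x ^ j) * (x - 1) = x ^ m - 1 :=
  geom_sum_mul_of_one_le hx m

open Finset in
private lemma sum_parity (x m : ℕ) (hx : Odd x) :
    (∑ j ∈ range m, x ^ j) % 2 = m % 2 := by
  rw [Finset.sum_nat_mod]
  have : ∀ j ∈ range m, x ^ j % 2 = 1 := fun j _ => Nat.odd_iff.mp (hx.pow)
  rw [Finset.sum_congr rfl this]
  simp

/-- If `n / gcd(n,i)` is even, then `x^(p^i+1)` is not planar over `F_{p^n}`. -/
theorem albert_monomial_not_planar (p : ℕ) [Fact p.Prime] (hp : Odd p)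
    (n i : ℕ) (hn : 1 ≤ n) (hi : 1 ≤ i)
    (heven : Even (n / Nat.gcd n i)) :
    ¬ (∀ a : GaloisField p n, a ≠ 0 →
        Function.Bijective
          (fun x : GaloisField p n => (x + a) ^ (p ^ i + 1) - x ^ (p ^ i + 1))) := by
  set F := GaloisField p n
  have hpprime := (Fact.out : p.Prime)
  have hp1 : 1 < p := hpprime.one_lt
  -- arithmetic setup
  set d := Nat.gcd n i with hd
  have hdn : d ∣ n := Nat.gcd_dvd_left n i
  have hdi : d ∣ i := Nat.gcd_dvd_right n i
  have hdpos : 0 < d := Nat.gcd_pos_of_pos_left i hn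
  set m := n / d with hm
  set e := i / d with he
  have hdm : d * m = n := Nat.mul_div_cancel' hdn
  have hde : d * e = i := Nat.mul_div_cancel' hdi
  have hme : Nat.Coprime m e := Nat.coprime_div_gcd_div_gcd hdpos
  have hmeven : Even m := heven
  have heodd : Odd e := by
    rcases Nat.even_or_odd e with h | h
    · exfalso
      obtain ⟨k, hk⟩ := hmeven
      obtain ⟨l, hl⟩ := h
      have : 2 ∣ Nat.gcd m e := Nat.dvd_gcd ⟨k, by omega⟩ ⟨l, by omega⟩
      rw [hme] at this; omega
    · exact h
  set x0 : ℕ := p ^ d with hx0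
  have hx0odd : Odd x0 := hp.pow
  have hx01 : 1 < x0 := Nat.one_lt_pow (by omega) hp1
  set S : ℕ := ∑ j ∈ Finset.range m, x0 ^ j with hS
  set T : ℕ := ∑ j ∈ Finset.range e, x0 ^ j with hT
  have hSid : S * (x0 - 1) = p ^ n - 1 := by
    rw [geom_nat x0 m (by omega), ← pow_mul, hdm]
  have hTid : T * (x0 - 1) = p ^ i - 1 := by
    rw [geom_nat x0 e (by omega), ← pow_mul, hde]
  have hSeven : S % 2 = 0 := by
    rw [sum_parity x0 m hx0odd, Nat.even_iff.mp hmeven]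
  have hTodd : T % 2 = 1 := by
    rw [sum_parity x0 e hx0odd, Nat.odd_iff.mp heodd]
  set N : ℕ := p ^ n - 1 with hN
  have hpn1 : 1 < p ^ n := Nat.one_lt_pow (by omega) hp1
  have hNpos : 0 < N := by omega
  have hNeven : N % 2 = 0 := by
    obtain ⟨k, hk⟩ : 2 ∣ S := by omega
    have h2 : 2 * (k * (x0 - 1)) = N := by rw [← hSid, hk]; ring
    omega
  have hkey : (S / 2) * (p ^ i - 1) = (N / 2) * T := by
    have h2S : 2 * (S / 2) = S := by omega
    have h2N : 2 * (N / 2) = N := by omega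
    have : 2 * ((S / 2) * (p ^ i - 1)) = 2 * ((N / 2) * T) := by
      calc 2 * ((S / 2) * (p ^ i - 1)) = S * (p ^ i - 1) := by rw [← mul_assoc, h2S]
        _ = S * (T * (x0 - 1)) := by rw [hTid]
        _ = (S * (x0 - 1)) * T := by ring
        _ = N * T := by rw [hSid]
        _ = 2 * ((N / 2) * T) := by rw [← mul_assoc, h2N]
    omega
  -- field setup
  have hcardF : Nat.card F = p ^ n := GaloisField.card p n (by omega)
  have hcardU : Nat.card Fˣ = N := by
    rw [Nat.card_units, hcardF]
  obtain ⟨g, hg⟩ := IsCyclic.exists_generator (α := Fˣ)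
  have hog : orderOf g = N := by
    rw [orderOf_eq_card_of_forall_mem_zpowers hg, hcardU]
  -- y = g^(N/2) = -1
  have hgN : (g : F) ^ N = 1 := by
    have h : g ^ N = 1 := by rw [← hog]; exact pow_orderOf_eq_one g
    rw [← Units.val_pow_eq_pow_val, h, Units.val_one]
  have hyne : (g : F) ^ (N / 2) ≠ 1 := by
    intro h
    have hu : g ^ (N / 2) = 1 := Units.ext (by simpa using h)
    have := orderOf_dvd_of_pow_eq_one hu
    rw [hog] at this
    have := Nat.le_of_dvd (by omega) this
    omega
  have hy : (g : F) ^ (N / 2) = -1 := by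
    have hsq : ((g : F) ^ (N / 2)) * ((g : F) ^ (N / 2)) = 1 := by
      rw [← pow_add]
      have : N / 2 + N / 2 = N := by omega
      rw [this, hgN]
    rcases mul_self_eq_one_iff.mp hsq with h | h
    · exact absurd h hyne
    · exact h
  -- x = g^(S/2) satisfies x^(p^i-1) = -1
  set x : F := (g : F) ^ (S / 2) with hx
  have hxne : x ≠ 0 := pow_ne_zero _ (Units.ne_zero g)
  have hxpow : x ^ (p ^ i - 1) = -1 := by
    rw [hx, ← pow_mul, hkey, pow_mul, hy]
    exact Odd.neg_one_pow (α := F) (Nat.odd_iff.mpr hTodd)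
  -- conclude
  intro hplanar
  have hbij := hplanar 1 one_ne_zero
  have hinj := hbij.injective
  have hq1 : p ^ i - 1 + 1 = p ^ i := by
    have : 1 ≤ p ^ i := Nat.one_le_pow _ _ (by omega)
    omega
  have hxq : x ^ (p ^ i) = -x := by
    rw [← hq1, pow_add, hxpow, pow_one, neg_one_mul]
  have hcharp : CharP F p := inferInstance
  have hfrob : (x + 1) ^ (p ^ i) = x ^ (p ^ i) + 1 := by
    rw [add_pow_char_pow, one_pow]
  have heq : (x + (1:F)) ^ (p ^ i + 1) - x ^ (p ^ i + 1)
      = ((0:F) + 1) ^ (p ^ i + 1) - (0:F) ^ (p ^ i + 1) := by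
    rw [pow_succ, hfrob, hxq, pow_succ, hxq]
    rw [zero_add, one_pow, zero_pow (by omega)]
    ring
  have := hinj heq
  exact hxne this
end

section
/- Let p be an odd prime, q = p^m with m ≥ 2, and 0 < i < m with gcd(i, m) = gcd(i, 2m). Then the linearized polynomial M(x) = 3x − x^{p^i} + x^q + x^{q p^i} is a permutation of F_{q^2}. -/
private lemma fix_pow_pow {F : Type*} [Monoid F] (w : F) (c : ℕ) (h : w ^ c = w) :
    ∀ k : ℕ, w ^ c ^ k = w := by
  intro k
  induction k with
  | zero => simp
  | succ n ih => rw [pow_succ, pow_mul, ih, h]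

private lemma fix_pow_gcd {F : Type*} [Monoid F] (p : ℕ) :
    ∀ a b : ℕ, ∀ w : F, w ^ p ^ a = w → w ^ p ^ b = w → w ^ p ^ (Nat.gcd a b) = w := by
  intro a
  induction a using Nat.strong_induction_on with
  | _ a ih =>
    intro b w ha hb
    rcases Nat.eq_zero_or_pos a with h0 | h0
    · subst h0; simpa using hb
    · rw [Nat.gcd_rec]
      refine ih (b % a) (Nat.mod_lt _ h0) a w ?_ ha
      have hdm : a * (b / a) + b % a = b := Nat.div_add_mod b a
      have he : p ^ b = (p ^ a) ^ (b / a) * p ^ (b % a) := by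
        rw [← pow_mul, ← pow_add, hdm]
      rw [he, pow_mul, fix_pow_pow w (p ^ a) ha] at hb
      exact hb

/-- The linearized polynomial `M(x) = 3x - x^{p^i} + x^q + x^{q p^i}` (with `q = p^m`)
is a permutation of `F_{q^2}` when `gcd(i,m) = gcd(i,2m)`. -/
theorem linearized_M_is_permutation (p : ℕ) [Fact p.Prime] (hp : Odd p)
    (m i : ℕ) (hm : 2 ≤ m) (hi1 : 0 < i) (hi2 : i < m)
    (hgcd : Nat.gcd i m = Nat.gcd i (2 * m)) :
    Function.Bijective
      (fun x : GaloisField p (2 * m) =>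
        3 * x - x ^ (p ^ i) + x ^ (p ^ m) + x ^ (p ^ m * p ^ i)) := by
  set F := GaloisField p (2 * m) with hF
  haveI : Fintype F := Fintype.ofFinite F
  have hpprime := (Fact.out : p.Prime)
  have hp2 : (2 : F) ≠ 0 := by
    rw [show (2 : F) = ((2 : ℕ) : F) by norm_num, Ne, CharP.cast_eq_zero_iff F p 2]
    intro h
    have h2 := (Nat.prime_dvd_prime_iff_eq hpprime Nat.prime_two).mp h
    have : ¬ Odd 2 := by decide
    exact this (h2 ▸ hp)
  -- every element satisfies z ^ p ^ (2m) = z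
  have hcard : ∀ z : F, z ^ p ^ (2 * m) = z := by
    intro z
    have h1 : Nat.card F = p ^ (2 * m) := GaloisField.card p (2 * m) (by omega)
    have h2 : Fintype.card F = p ^ (2 * m) := by rwa [← Nat.card_eq_fintype_card]
    rw [← h2]
    exact FiniteField.pow_card z
  have hqq : ∀ z : F, (z ^ p ^ m) ^ p ^ m = z := by
    intro z
    rw [← pow_mul, ← pow_add, ← two_mul]
    exact hcard z
  have hoddpi : Odd (p ^ i) := hp.pow
  -- kernel is trivial
  have hker : ∀ x : F,
      3 * x - x ^ p ^ i + x ^ p ^ m + x ^ (p ^ m * p ^ i) = 0 → x = 0 := by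
    intro x hx
    set y : F := x + x ^ p ^ m with hy
    set w : F := x - x ^ p ^ m with hw
    have hwq : w ^ p ^ m = -w := by
      rw [hw, sub_pow_char_pow, hqq]
      ring
    have hyq : y ^ p ^ m = y := by
      rw [hy, add_pow_char_pow, hqq]
      ring
    have h1 : 2 * y + w - w ^ p ^ i = 0 := by
      have e1 : w ^ p ^ i = x ^ p ^ i - (x ^ p ^ m) ^ p ^ i := by
        rw [hw, sub_pow_char_pow]
      have e2 : (x ^ p ^ m) ^ p ^ i = x ^ (p ^ m * p ^ i) := (pow_mul x _ _).symm
      rw [e1, e2, hy, hw]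
      linear_combination hx
    have h2 : 2 * y - w + w ^ p ^ i = 0 := by
      have := congrArg (iterateFrobenius F p m) h1
      simp only [map_sub, map_add, map_mul, map_ofNat, map_zero,
        iterateFrobenius_def] at this
      rw [hyq, hwq, ← pow_mul, mul_comm (p ^ i), pow_mul, hwq,
        Odd.neg_pow hoddpi] at this
      linear_combination this
    have hy0 : y = 0 := by
      have h4 : (2 : F) * (2 * y) = 0 := by linear_combination h1 + h2
      rcases mul_eq_zero.mp h4 with h | h
      · exact absurd h hp2
      · rcases mul_eq_zero.mp h with h' | h'
        · exact absurd h' hp2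
        · exact h'
    have hwfix : w ^ p ^ i = w := by
      have h4 : (2 : F) * (w - w ^ p ^ i) = 0 := by linear_combination h1 - h2
      rcases mul_eq_zero.mp h4 with h | h
      · exact absurd h hp2
      · exact (sub_eq_zero.mp h).symm
    -- w lies in F_{p^gcd(i,2m)} = F_{p^gcd(i,m)} ⊆ F_q
    have hgfix : w ^ p ^ (Nat.gcd i m) = w := by
      rw [hgcd]
      exact fix_pow_gcd p i (2 * m) w hwfix (hcard w)
    have hwqfix : w ^ p ^ m = w := by
      have hd : Nat.gcd i m ∣ m := Nat.gcd_dvd_right i m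
      have : w ^ (p ^ Nat.gcd i m) ^ (m / Nat.gcd i m) = w :=
        fix_pow_pow w _ hgfix _
      rwa [← pow_mul, Nat.mul_div_cancel' hd] at this
    have hw0 : w = 0 := by
      have : (2 : F) * w = 0 := by
        have := hwq
        rw [hwqfix] at this
        linear_combination this
      rcases mul_eq_zero.mp this with h | h
      · exact absurd h hp2
      · exact h
    have : (2 : F) * x = 0 := by
      have : y + w = 2 * x := by rw [hy, hw]; ring
      rw [hy0, hw0] at this
      linear_combination -this
    rcases mul_eq_zero.mp this with h | h
    · exact absurd h hp2
    · exact h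
  -- additive map with trivial kernel on a finite field is bijective
  rw [← Finite.injective_iff_bijective]
  intro a b hab
  simp only at hab
  have hsub : 3 * (a - b) - (a - b) ^ p ^ i + (a - b) ^ p ^ m +
      (a - b) ^ (p ^ m * p ^ i) = 0 := by
    rw [sub_pow_char_pow, sub_pow_char_pow,
      show ∀ z : F, z ^ (p ^ m * p ^ i) = (z ^ p ^ m) ^ p ^ i from
        fun z => pow_mul z _ _,
      sub_pow_char_pow, sub_pow_char_pow]
    linear_combination hab
  have := hker (a - b) hsub
  exact sub_eq_zero.mp this
end

section
/- Let p be an odd prime, q = p^m with m ≥ 2, 0 < i < m, r = p^i. With t(x) = x^q − x, L(x) = 8^{-1}(x^r − x), and F(x) = L(t(x)^2) + 2^{-1} x^2 over F_{q^2}, and M(x) = 3x − x^r + x^q + x^{qr}, one has the polynomial identity 2·M(F(x)) = 2x^2 + 2x^{q+1} − 2x^{r(q+1)} + 2x^{2qr} for all x ∈ F_{q^2}. -/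
section aux

variable {K : Type*} [Field K] (p : ℕ) [Fact p.Prime] [CharP K p]

private lemma frob_natCast' (k n : ℕ) : ((n : K)) ^ p ^ k = (n : K) := by
  have h := map_natCast (iterateFrobenius K p k) n
  rwa [iterateFrobenius_def] at h

private lemma frob_inv' (k : ℕ) (a : K) : (a⁻¹) ^ p ^ k = (a ^ p ^ k)⁻¹ := by
  have h := map_inv₀ (iterateFrobenius K p k) a
  rwa [iterateFrobenius_def, iterateFrobenius_def] at h

end aux

/-- The identity `2·M(F(x)) = 2x^2 + 2x^{q+1} - 2x^{r(q+1)} + 2x^{2qr}` over `F_{q^2}`,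
where `q = p^m`, `r = p^i`, `t(x) = x^q - x`, `L(x) = 8⁻¹(x^r - x)`,
`F(x) = L(t(x)^2) + 2⁻¹ x^2`, and `M(x) = 3x - x^r + x^q + x^{qr}`. -/
theorem two_M_F_eq_quadrinomial (p : ℕ) [Fact p.Prime] (hp : Odd p)
    (m i : ℕ) (hm : 2 ≤ m) (hi1 : 0 < i) (hi2 : i < m)
    (t L F M : GaloisField p (2 * m) → GaloisField p (2 * m))
    (ht : ∀ x, t x = x ^ (p ^ m) - x)
    (hL : ∀ x, L x = (8 : GaloisField p (2 * m))⁻¹ * (x ^ (p ^ i) - x))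
    (hF : ∀ x, F x = L ((t x) ^ 2) + (2 : GaloisField p (2 * m))⁻¹ * x ^ 2)
    (hM : ∀ x, M x = 3 * x - x ^ (p ^ i) + x ^ (p ^ m) + x ^ (p ^ m * p ^ i)) :
    ∀ x : GaloisField p (2 * m),
      2 * M (F x)
        = 2 * x ^ 2 + 2 * x ^ (p ^ m + 1)
            - 2 * x ^ (p ^ i * (p ^ m + 1)) + 2 * x ^ (2 * p ^ m * p ^ i) := by
  intro x
  have hp2 : p ≠ 2 := by rintro rfl; exact (Nat.not_odd_iff_even.mpr even_two) hp
  have h2 : (2 : GaloisField p (2 * m)) ≠ 0 := by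
    intro h
    have h' : ((2 : ℕ) : GaloisField p (2 * m)) = 0 := by exact_mod_cast h
    have := (CharP.cast_eq_zero_iff (GaloisField p (2 * m)) p 2).mp h'
    exact hp2 ((Nat.prime_dvd_prime_iff_eq (Fact.out : p.Prime) Nat.prime_two).mp this)
  have h8 : (8 : GaloisField p (2 * m)) ≠ 0 := by
    have h83 : (8 : GaloisField p (2 * m)) = 2 ^ 3 := by norm_num
    rw [h83]; exact pow_ne_zero _ h2
  have hfsub : ∀ (k : ℕ) (a b : GaloisField p (2 * m)),
      (a - b) ^ p ^ k = a ^ p ^ k - b ^ p ^ k := fun k a b => sub_pow_char_pow a b k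
  have hfadd : ∀ (k : ℕ) (a b : GaloisField p (2 * m)),
      (a + b) ^ p ^ k = a ^ p ^ k + b ^ p ^ k := fun k a b => add_pow_char_pow a b p k
  have h2k : ∀ k : ℕ, (2 : GaloisField p (2 * m)) ^ p ^ k = 2 := by
    intro k
    have : ((2 : ℕ) : GaloisField p (2 * m)) = (2 : GaloisField p (2 * m)) := by norm_num
    rw [← this, frob_natCast' p]
  have h8k : ∀ k : ℕ, (8 : GaloisField p (2 * m)) ^ p ^ k = 8 := by
    intro k
    have : ((8 : ℕ) : GaloisField p (2 * m)) = (8 : GaloisField p (2 * m)) := by norm_num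
    rw [← this, frob_natCast' p]
  haveI : Fintype (GaloisField p (2 * m)) := Fintype.ofFinite _
  have hcard : Fintype.card (GaloisField p (2 * m)) = p ^ (2 * m) := by
    rw [← Nat.card_eq_fintype_card]; exact GaloisField.card p (2 * m) (by omega)
  have hq2 : ∀ y : GaloisField p (2 * m), (y ^ p ^ m) ^ p ^ m = y := by
    intro y
    rw [← pow_mul, ← pow_add]
    have hmm : m + m = 2 * m := by ring
    rw [hmm, ← hcard]
    exact FiniteField.pow_card y
  obtain ⟨u, hu⟩ : ∃ u, u = x ^ p ^ m - x := ⟨_, rfl⟩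
  have huq : u ^ p ^ m = -u := by
    rw [hu, hfsub, hq2]; ring
  obtain ⟨v, hv⟩ : ∃ v : GaloisField p (2 * m), v = u ^ 2 := ⟨_, rfl⟩
  obtain ⟨w, hw⟩ : ∃ w : GaloisField p (2 * m), w = v ^ p ^ i := ⟨_, rfl⟩
  have hvq : v ^ p ^ m = v := by
    rw [hv, ← pow_mul, mul_comm 2 (p ^ m), pow_mul, huq]; ring
  have hwq : w ^ p ^ m = w := by
    rw [hw, ← pow_mul, mul_comm (p ^ i) (p ^ m), pow_mul, hvq]
  have hFe : F x = (8 : GaloisField p (2 * m))⁻¹ * (w - v)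
      + (2 : GaloisField p (2 * m))⁻¹ * x ^ 2 := by
    rw [hF, hL, ht, ← hu, ← hv, ← hw]
  have hfrobF : ∀ k : ℕ,
      (F x) ^ p ^ k = (8 : GaloisField p (2 * m))⁻¹ * (w ^ p ^ k - v ^ p ^ k)
        + (2 : GaloisField p (2 * m))⁻¹ * (x ^ 2) ^ p ^ k := by
    intro k
    rw [hFe, hfadd, mul_pow, mul_pow, hfsub, frob_inv' p, frob_inv' p, h8k, h2k]
  have hFr : (F x) ^ p ^ i = (8 : GaloisField p (2 * m))⁻¹ * (w ^ p ^ i - w)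
      + (2 : GaloisField p (2 * m))⁻¹ * (x ^ 2) ^ p ^ i := by
    rw [hfrobF i, ← hw]
  have hFq : (F x) ^ p ^ m = (8 : GaloisField p (2 * m))⁻¹ * (w - v)
      + (2 : GaloisField p (2 * m))⁻¹ * (x ^ 2) ^ p ^ m := by
    rw [hfrobF m, hwq, hvq]
  have hFqr : (F x) ^ (p ^ m * p ^ i)
      = (8 : GaloisField p (2 * m))⁻¹ * (w ^ p ^ i - w)
        + (2 : GaloisField p (2 * m))⁻¹ * ((x ^ 2) ^ p ^ m) ^ p ^ i := by
    rw [pow_mul, hFq, hfadd, mul_pow, mul_pow, hfsub, frob_inv' p, frob_inv' p,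
      h8k, h2k, ← hw]
  have key : 2 * M (F x)
      = (w - v) + (3 * x ^ 2 + (x ^ 2) ^ p ^ m + ((x ^ 2) ^ p ^ m) ^ p ^ i
          - (x ^ 2) ^ p ^ i) := by
    rw [hM, hFr, hFq, hFqr, hFe]
    field_simp
    ring
  rw [key]
  have hwx : w = x ^ (2 * (p ^ m * p ^ i)) - 2 * (x ^ (p ^ m * p ^ i) * x ^ p ^ i)
      + x ^ (2 * p ^ i) := by
    have hvx : v = (x ^ p ^ m) ^ 2 - 2 * (x ^ p ^ m * x) + x ^ 2 := by rw [hv, hu]; ring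
    rw [hw, hvx, hfadd, hfsub, mul_pow, h2k, mul_pow]
    ring
  rw [hwx, hv, hu]
  ring
end

section
/- Let p be an odd prime, q = p^m with m ≥ 2, and 0 < i < m with gcd(i,m) = gcd(i,2m). Then x^2 + x^{q+1} − x^{(q+1)p^i} + x^{2q p^i} is a planar function over F_{q^2}. -/
private lemma dqp_fix_pow_mul {K : Type*} [Field K] (P : ℕ) (W : K) (n k : ℕ)
    (h : W ^ P ^ n = W) : W ^ P ^ (n * k) = W := by
  induction k with
  | zero => simp
  | succ k ih => rw [Nat.mul_succ, pow_add, pow_mul, ih, h]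

private lemma dqp_fix_pow_gcd {K : Type*} [Field K] (P : ℕ) [Fact P.Prime] [CharP K P] (W : K) :
    ∀ a b : ℕ, W ^ P ^ a = W → W ^ P ^ b = W → W ^ P ^ (Nat.gcd a b) = W := by
  intro a b
  induction a, b using Nat.gcd.induction with
  | H0 n => intro _ hb; simpa using hb
  | H1 a b ha ih =>
    intro h1 h2
    rw [Nat.gcd_rec]
    refine ih ?_ h1
    have hinj : Function.Injective fun x : K => x ^ P ^ (a * (b / a)) := by
      have := (iterateFrobenius K P (a * (b / a))).injective
      exact fun x y hxy => this (by simpa [iterateFrobenius_def] using hxy)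
    apply hinj
    show (W ^ P ^ (b % a)) ^ P ^ (a * (b / a)) = W ^ P ^ (a * (b / a))
    rw [← pow_mul, ← pow_add, Nat.mod_add_div, h2, dqp_fix_pow_mul P W a (b / a) h1]

/-- The quadrinomial `x^2 + x^{q+1} - x^{(q+1)p^i} + x^{2qp^i}` is planar over `F_{q^2}`
when `gcd(i,m) = gcd(i,2m)`, representing the Dickson semifield. -/
theorem dickson_quadrinomial_planar (p : ℕ) [Fact p.Prime] (hp : Odd p)
    (m i : ℕ) (hm : 2 ≤ m) (hi1 : 0 < i) (hi2 : i < m)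
    (hgcd : Nat.gcd i m = Nat.gcd i (2 * m))
    (F : GaloisField p (2 * m) → GaloisField p (2 * m))
    (hF : ∀ x, F x = x ^ 2 + x ^ (p ^ m + 1)
        - x ^ ((p ^ m + 1) * p ^ i) + x ^ (2 * p ^ m * p ^ i)) :
    ∀ a : GaloisField p (2 * m), a ≠ 0 →
      Function.Bijective (fun x => F (x + a) - F x) := by
  classical
  intro a ha
  haveI : Fintype (GaloisField p (2 * m)) := Fintype.ofFinite _
  have hpprime : p.Prime := Fact.out
  have hcard : Fintype.card (GaloisField p (2 * m)) = p ^ (2 * m) := by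
    rw [← Nat.card_eq_fintype_card]; exact GaloisField.card p (2 * m) (by omega)
  have hbig : ∀ w : GaloisField p (2 * m), w ^ p ^ (2 * m) = w := by
    intro w; rw [← hcard]; exact FiniteField.pow_card w
  set t := iterateFrobenius (GaloisField p (2 * m)) p m with htdef
  set s := iterateFrobenius (GaloisField p (2 * m)) p i with hsdef
  have td : ∀ w, t w = w ^ p ^ m := fun w => iterateFrobenius_def p m w
  have sd : ∀ w, s w = w ^ p ^ i := fun w => iterateFrobenius_def p i w
  have hp2 : p ≠ 2 := by
    rintro rfl
    have := Nat.odd_iff.mp hp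
    omega
  have p2 : (2 : GaloisField p (2 * m)) ≠ 0 := by
    intro h
    have h2 : ((2 : ℕ) : GaloisField p (2 * m)) = 0 := by exact_mod_cast h
    have hdvd := (CharP.cast_eq_zero_iff (GaloisField p (2 * m)) p 2).mp h2
    have := Nat.le_of_dvd (by norm_num) hdvd
    have := hpprime.two_le
    omega
  have tt : ∀ w, t (t w) = w := by
    intro w
    rw [td, td, ← pow_mul, ← pow_add, ← two_mul]
    exact hbig w
  have ts : ∀ w, t (s w) = s (t w) := by
    intro w
    rw [td, sd, sd, td, ← pow_mul, ← pow_mul, ← pow_add, ← pow_add, Nat.add_comm]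
  -- existence of a nonzero element negated by t
  obtain ⟨y, hy⟩ : ∃ y : GaloisField p (2 * m), t y ≠ y := by
    by_contra hcon
    push_neg at hcon
    have h1 : ∀ x : (GaloisField p (2 * m))ˣ, x ^ (p ^ m - 1) = 1 := by
      intro x
      have hx := hcon (x : GaloisField p (2 * m))
      rw [td] at hx
      have hx0 : (x : GaloisField p (2 * m)) ≠ 0 := x.ne_zero
      have hpm1 : 1 ≤ p ^ m := Nat.one_le_pow _ _ hpprime.pos
      have hco : (x : GaloisField p (2 * m)) ^ (p ^ m - 1) = 1 := by
        have h3 : (x : GaloisField p (2 * m)) ^ (p ^ m - 1) * x = 1 * x := by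
          rw [← pow_succ, one_mul, Nat.sub_add_cancel hpm1, hx]
        exact mul_right_cancel₀ hx0 h3
      ext
      push_cast
      exact hco
    have hdvd := (FiniteField.forall_pow_eq_one_iff (K := GaloisField p (2 * m)) (p ^ m - 1)).mp h1
    rw [hcard] at hdvd
    have hlt : p ^ m < p ^ (2 * m) := Nat.pow_lt_pow_right hpprime.one_lt (by omega)
    have hpm1 : 2 ≤ p ^ m := by
      calc 2 ≤ p := hpprime.two_le
      _ = p ^ 1 := (pow_one p).symm
      _ ≤ p ^ m := Nat.pow_le_pow_right hpprime.pos (by omega)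
    have := Nat.le_of_dvd (by omega) hdvd
    omega
  obtain ⟨β, hβ0, hβt⟩ : ∃ β : GaloisField p (2 * m), β ≠ 0 ∧ t β = -β := by
    refine ⟨y - t y, sub_ne_zero.mpr (fun h => hy h.symm), ?_⟩
    rw [map_sub, tt]; ring
  -- decomposition into t-fixed coordinates
  have decomp : ∀ z : GaloisField p (2 * m), ∃ u v, t u = u ∧ t v = v ∧
      z = u + v * β ∧ t z = u - v * β := by
    intro z
    refine ⟨(z + t z) / 2, (z - t z) / (2 * β), ?_, ?_, ?_, ?_⟩
    · rw [map_div₀, map_add, tt, map_ofNat]; ring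
    · rw [map_div₀, map_sub, tt, map_mul, map_ofNat, hβt, mul_neg, div_neg, ← neg_div, neg_sub]
    · field_simp
      ring
    · field_simp
      ring
  obtain ⟨c, d, hc, hd, haeq, hta⟩ := decomp a
  -- rewritten form of F
  have hF' : ∀ z : GaloisField p (2 * m),
      F z = z ^ 2 + t z * z - s (t z) * s z + (s (t z)) ^ 2 := by
    intro z
    have e2 : z ^ ((p ^ m + 1) * p ^ i) = (z ^ p ^ m) ^ p ^ i * z ^ p ^ i := by
      rw [pow_mul, pow_succ, mul_pow]
    have e3 : z ^ (2 * p ^ m * p ^ i) = ((z ^ p ^ m) ^ p ^ i) ^ 2 := by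
      rw [show 2 * p ^ m * p ^ i = p ^ m * p ^ i * 2 by ring, pow_mul, pow_mul]
    rw [hF z, pow_succ z (p ^ m), e2, e3]
    simp only [td, sd]
  -- the derivative identity
  have key : ∀ z, F (z + a) - F z
      = (2 * z * a + (z * t a + a * t z) - (s z * s (t a) + s a * s (t z))
          + 2 * (s (t z) * s (t a))) + F a := by
    intro z
    rw [hF' (z + a), hF' z, hF' a]
    simp only [map_add]
    ring
  -- kernel of the linearized map is trivial
  have hker : ∀ z, (2 * z * a + (z * t a + a * t z) - (s z * s (t a) + s a * s (t z))
      + 2 * (s (t z) * s (t a))) = 0 → z = 0 := by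
    intro z hz
    obtain ⟨u, v, hu, hv, hzeq, htz⟩ := decomp z
    rw [htz, hta, hzeq, haeq] at hz
    simp only [map_add, map_sub, map_mul] at hz
    have hz' := congrArg t hz
    simp only [map_add, map_sub, map_mul, map_zero, map_ofNat, map_neg, ts, hu, hv, hc, hd,
      hβt] at hz'
    have hE1 : u * c + s β ^ 2 * (s v * s d) = 0 := by
      have h8 : (8 : GaloisField p (2 * m)) * (u * c + s β ^ 2 * (s v * s d)) = 0 := by
        linear_combination hz + hz'
      have h8ne : (8 : GaloisField p (2 * m)) ≠ 0 := by
        have h83 : (8 : GaloisField p (2 * m)) = 2 ^ 3 := by norm_num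
        rw [h83]; exact pow_ne_zero _ p2
      exact (mul_eq_zero.mp h8).resolve_left h8ne
    have hE2 : (u * d + v * c) * β = (s u * s d + s v * s c) * s β := by
      have h4 : (4 : GaloisField p (2 * m)) *
          ((u * d + v * c) * β - (s u * s d + s v * s c) * s β) = 0 := by
        linear_combination hz - hz'
      have h4ne : (4 : GaloisField p (2 * m)) ≠ 0 := by
        have h42 : (4 : GaloisField p (2 * m)) = 2 ^ 2 := by norm_num
        rw [h42]; exact pow_ne_zero _ p2
      exact sub_eq_zero.mp ((mul_eq_zero.mp h4).resolve_left h4ne)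
    -- step 2 : u*d + v*c = 0 via the gcd condition
    have hudvc : u * d + v * c = 0 := by
      have hWs : ((u * d + v * c) * β) ^ p ^ i = (u * d + v * c) * β := by
        rw [← sd, map_mul, map_add, map_mul, map_mul]
        exact hE2.symm
      have hWg : ((u * d + v * c) * β) ^ p ^ (Nat.gcd i (2 * m)) = (u * d + v * c) * β :=
        dqp_fix_pow_gcd p _ i (2 * m) hWs (hbig _)
      rw [← hgcd] at hWg
      obtain ⟨k, hk⟩ := Nat.gcd_dvd_right i m
      have hWm := dqp_fix_pow_mul p ((u * d + v * c) * β) (Nat.gcd i m) k hWg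
      rw [← hk] at hWm
      have htW : t ((u * d + v * c) * β) = (u * d + v * c) * β := by rw [td]; exact hWm
      have htW2 : t ((u * d + v * c) * β) = -((u * d + v * c) * β) := by
        rw [map_mul, map_add, map_mul, map_mul, hu, hv, hc, hd, hβt]; ring
      have h2W : (2 : GaloisField p (2 * m)) * ((u * d + v * c) * β) = 0 := by
        linear_combination htW2 - htW
      have hW0 := (mul_eq_zero.mp h2W).resolve_left p2
      exact (mul_eq_zero.mp hW0).resolve_right hβ0
    rw [hzeq]
    by_cases hv0 : v = 0
    · rw [hv0] at hE1 hudvc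
      simp only [map_zero, mul_zero, zero_mul, add_zero, zero_add] at hE1 hudvc
      by_cases hu0 : u = 0
      · rw [hu0, hv0]; ring
      · exfalso
        have hc0 : c = 0 := (mul_eq_zero.mp hE1).resolve_left hu0
        have hd0 : d = 0 := (mul_eq_zero.mp hudvc).resolve_left hu0
        apply ha
        rw [haeq, hc0, hd0]; ring
    · exfalso
      by_cases hd0 : d = 0
      · rw [hd0] at hudvc
        simp only [mul_zero, zero_add] at hudvc
        have hc0 : c = 0 := (mul_eq_zero.mp hudvc).resolve_left hv0
        apply ha
        rw [haeq, hc0, hd0]; ring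
      · -- main contradiction via the square argument
        have hsquare : (u * d) ^ 2 = s β ^ 2 * (s v * s d * (v * d)) := by
          linear_combination (u * d) * hudvc - (v * d) * hE1
        obtain ⟨k, hk⟩ := hp.pow (n := i)
        have key2 : (u * d) ^ 2 = (s β * (v * d) ^ (k + 1)) ^ 2 := by
          have hvd : s v * s d = (v * d) ^ p ^ i := by rw [← map_mul, sd]
          rw [hsquare, hvd, ← pow_succ, show p ^ i + 1 = (k + 1) * 2 by omega, pow_mul]
          ring
        have hfac : (u * d - s β * (v * d) ^ (k + 1)) * (u * d + s β * (v * d) ^ (k + 1)) = 0 := by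
          linear_combination key2
        have htr : t (s β * (v * d) ^ (k + 1)) = -(s β * (v * d) ^ (k + 1)) := by
          rw [map_mul, ts, hβt, map_neg, map_pow, map_mul, hv, hd]; ring
        have hzero : s β * (v * d) ^ (k + 1) = 0 := by
          rcases mul_eq_zero.mp hfac with h | h
          · have h1 : u * d = s β * (v * d) ^ (k + 1) := sub_eq_zero.mp h
            have h2 := congrArg t h1
            rw [map_mul, hu, hd, htr] at h2
            have hud : u * d = 0 := by
              have h3 : (2 : GaloisField p (2 * m)) * (u * d) = 0 := by
                linear_combination h1 + h2
              exact (mul_eq_zero.mp h3).resolve_left p2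
            rw [← h1, hud]
          · have h1 : u * d = -(s β * (v * d) ^ (k + 1)) := eq_neg_of_add_eq_zero_left h
            have h2 := congrArg t h1
            rw [map_mul, hu, hd, map_neg, htr, neg_neg] at h2
            have hud : u * d = 0 := by
              have h3 : (2 : GaloisField p (2 * m)) * (u * d) = 0 := by
                linear_combination h1 + h2
              exact (mul_eq_zero.mp h3).resolve_left p2
            rw [← h2, hud]
        rcases mul_eq_zero.mp hzero with h' | h'
        · exact absurd h' (by rw [sd]; exact pow_ne_zero _ hβ0)
        · exact (mul_ne_zero hv0 hd0) (pow_eq_zero_iff (Nat.succ_ne_zero k) |>.mp h')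
  -- conclude
  rw [← Finite.injective_iff_bijective]
  intro x y hxy
  have hxy' : F (x + a) - F x = F (y + a) - F y := hxy
  rw [key x, key y] at hxy'
  have hB := add_right_cancel hxy'
  have hsub : x - y = 0 := by
    apply hker
    simp only [map_sub]
    linear_combination hB
  exact sub_eq_zero.mp hsub
end

section
/- Let (S, +, ⋆) be a finite presemifield. Then the additive group (S, +) is an elementary abelian p-group for some prime p; in particular |S| is a prime power. -/
/-- Knuth: the additive group of a finite presemifield is elementary abelian, so its
cardinality is a prime power. -/
theorem presemifield_additive_group_elementary_abelian
    (S : Type*) [Fintype S] [AddCommGroup S] (star : S → S → S)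
    (hld : ∀ a b c : S, star (a + b) c = star a c + star b c)
    (hrd : ∀ a b c : S, star a (b + c) = star a b + star a c)
    (hnz : ∀ a b : S, star a b = 0 → a = 0 ∨ b = 0) :
    ∃ p : ℕ, p.Prime ∧ (∀ x : S, p • x = 0) ∧ ∃ n : ℕ, Fintype.card S = p ^ n := by
  by_cases hS : Subsingleton S
  · refine ⟨2, Nat.prime_two, fun x => Subsingleton.elim _ _, 0, ?_⟩
    simp [Fintype.card_eq_one_iff_nonempty_unique]
    exact ⟨⟨⟨0⟩, fun x => Subsingleton.elim _ _⟩⟩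
  · have : Nontrivial S := not_subsingleton_iff_nontrivial.mp hS
    -- key lemma: for any nonzero a, (addOrderOf a) • x = 0 for all x
    have key : ∀ a : S, a ≠ 0 → ∀ x : S, (addOrderOf a) • x = 0 := by
      intro a ha x
      -- right multiplication by a is surjective
      have g : S →+ S := AddMonoidHom.mk' (star a) (hrd a)
      have hg : Function.Surjective (star a) := by
        have hinj : Function.Injective (star a) := by
          have := (injective_iff_map_eq_zero (AddMonoidHom.mk' (star a) (hrd a))).2
          exact this (fun b hb => (hnz a b hb).resolve_left ha)
        exact Finite.injective_iff_surjective.mp hinj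
      obtain ⟨b, rfl⟩ := hg x
      have := (AddMonoidHom.mk' (fun y => star y b) (fun y z => hld y z b)).map_nsmul
        (addOrderOf a) a
      simp only [AddMonoidHom.mk'_apply] at this
      rw [← this, addOrderOf_nsmul_eq_zero a]
      simpa using (AddMonoidHom.mk' (fun y => star y b) (fun y z => hld y z b)).map_zero
    obtain ⟨a, ha⟩ := exists_ne (0 : S)
    set p := addOrderOf a with hp
    have hp1 : 1 < p := by
      have h0 : 0 < p := addOrderOf_pos a
      rcases Nat.lt_or_ge 1 p with h | h
      · exact h
      · exfalso
        have : p = 1 := by omega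
        exact ha (AddMonoid.addOrderOf_eq_one_iff.mp this)
    set q := p.minFac with hq
    have hqprime : q.Prime := Nat.minFac_prime (by omega)
    have hqdvd : q ∣ p := Nat.minFac_dvd p
    set c := (p / q) • a with hc
    have hcne : c ≠ 0 := by
      intro h
      have : p ∣ p / q := addOrderOf_dvd_of_nsmul_eq_zero h
      have h1 : p / q < p := Nat.div_lt_self (by omega) hqprime.one_lt
      have h2 : 0 < p / q := Nat.div_pos (Nat.minFac_le (by omega)) hqprime.pos
      exact absurd (Nat.le_of_dvd h2 this) (by omega)
    have hqc : q • c = 0 := by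
      rw [hc, ← mul_nsmul]
      rw [Nat.div_mul_cancel hqdvd]
      exact addOrderOf_nsmul_eq_zero a
    have hoc : addOrderOf c = q := by
      have hdvd : addOrderOf c ∣ q := addOrderOf_dvd_of_nsmul_eq_zero hqc
      rcases (Nat.dvd_prime hqprime).mp hdvd with h | h
      · exact absurd (AddMonoid.addOrderOf_eq_one_iff.mp h) hcne
      · exact h
    have hall : ∀ x : S, q • x = 0 := by
      intro x; rw [← hoc]; exact key c hcne x
    refine ⟨q, hqprime, hall, ?_⟩
    have : NeZero q := ⟨hqprime.ne_zero⟩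
    letI : Module (ZMod q) S := AddCommGroup.zmodModule hall
    haveI : Fact q.Prime := ⟨hqprime⟩
    exact ⟨Module.finrank (ZMod q) S, by
      have := Module.card_eq_pow_finrank (K := ZMod q) (V := S)
      rwa [ZMod.card] at this⟩
end

section
/- Over F_{3^4}, the function F(x) = x^{36} + 2x^{10} + 2x^4 is planar. -/
instance : Fact (Nat.Prime 3) := ⟨by norm_num⟩

set_option maxHeartbeats 16000000 in
set_option maxRecDepth 100000 in
private lemma aux_cert (p q : GaloisField 3 4)
    (hE : p^13*q^4 + p^4*q^13 - p^4 - q^4 - p - q = 0)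
    (hp : p^40 = 1) (hq : q^40 = 1) : False := by
  have h3 : (3 : GaloisField 3 4) = 0 := by
    exact_mod_cast CharP.cast_eq_zero (GaloisField 3 4) 3
  have h1 : (1 : GaloisField 3 4) = 0 := by
    linear_combination (-q^7 - q^12 - q^15 + q^20 + q^23 + q^31 - q^36 + q^39 + p*q^3 - p*q^6 + p*q^7 + p*q^8 + p*q^11 - p*q^12 + p*q^14 - p*q^19 - p*q^20 - p*q^21 - p*q^22 - p*q^27 - p*q^30 - p*q^38 - p^2*q^5 - p^2*q^10 - p^2*q^13 - p^2*q^18 + p^2*q^19 + p^2*q^20 + p^2*q^21 + p^2*q^26 + p^2*q^32 + p^2*q^34 + p^2*q^37 + p^3*q + p^3*q^4 + p^3*q^12 + p^3*q^17 + p^3*q^20 + p^3*q^23 + p^3*q^25 + p^3*q^26 + p^3*q^28 - p^3*q^29 + p^3*q^32 - p^3*q^36 + p^4*q^3 - p^4*q^8 + p^4*q^14 + p^4*q^16 - p^4*q^17 + p^4*q^19 + p^4*q^20 - p^4*q^23 + p^4*q^24 - p^4*q^25 + p^4*q^26 - p^4*q^27 - p^4*q^28 - p^4*q^29 - p^4*q^32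 - p^4*q^35 - p^5*q^2 - p^5*q^7 + p^5*q^10 + p^5*q^15 + p^5*q^16 + p^5*q^18 + p^5*q^19 + p^5*q^23 + p^5*q^24 - p^5*q^25 + p^5*q^26 - p^5*q^28 + p^5*q^34 - p^5*q^39 - p^6*q - p^6*q^6 + p^6*q^9 - p^6*q^14 + p^6*q^15 - p^6*q^16 + p^6*q^17 + p^6*q^20 - p^6*q^22 + p^6*q^24 - p^6*q^25 + p^6*q^28 - p^6*q^30 - p^6*q^33 + p^6*q^38 - p^7 + p^7*q - p^7*q^5 - p^7*q^11 + p^7*q^13 - p^7*q^14 + p^7*q^17 + p^7*q^19 - p^7*q^20 - p^7*q^21 - p^7*q^22 + p^7*q^24 + p^7*q^28 + p^7*q^29 - p^7*q^32 + p^7*q^38 + p^8*q - p^8*q^4 + p^8*q^10 - p^8*q^13 + p^8*q^15 + p^8*q^16 - p^8*q^19 + p^8*q^21 - p^8*q^22 - p^8*q^23 + p^8*q^28 - p^8*q^29 + p^8*q^31 - p^8*q^32 + p^8*q^37 + p^8*q^38 - p^8*q^39 + p^9*q^6 - p^9*q^11 + p^9*q^12 - p^9*q^14 - p^9*q^20 +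 p^9*q^21 - p^9*q^22 - p^9*q^28 - p^9*q^30 + p^9*q^35 + p^9*q^37 + p^9*q^38 - p^10*q^2 + p^10*q^5 + p^10*q^8 - p^10*q^10 - p^10*q^11 + p^10*q^12 + p^10*q^13 + p^10*q^16 + p^10*q^18 - p^10*q^20 + p^10*q^21 - p^10*q^26 - p^10*q^29 - p^10*q^34 - p^10*q^37 + p^11*q - p^11*q^7 - p^11*q^9 - p^11*q^10 - p^11*q^12 - p^11*q^16 + p^11*q^18 + p^11*q^20 - p^11*q^26 - p^11*q^28 - p^11*q^29 - p^11*q^34 + p^11*q^36 - p^12 - p^12*q + p^12*q^3 + p^12*q^9 + p^12*q^10 - p^12*q^11 - p^12*q^16 - p^12*q^17 + p^12*q^18 - p^12*q^19 - p^12*q^27 + p^12*q^32 - p^12*q^33 - p^12*q^34 + p^12*q^35 - p^13*q^2 + p^13*q^7 - p^13*q^8 + p^13*q^10 + p^13*q^16 - p^13*q^17 + p^13*q^18 + p^13*q^24 + p^13*q^26 - p^13*q^31 - p^13*q^33 - p^13*q^34 + p^14*q + p^14*q^4 - p^14*q^6 - p^14*q^7 - p^14*q^9 + p^14*q^16 +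 p^14*q^22 - p^14*q^25 + p^14*q^30 + p^14*q^33 - p^14*q^38 - p^15 + p^15*q^5 + p^15*q^6 + p^15*q^8 - p^15*q^16 - p^15*q^17 - p^15*q^19 + p^15*q^20 + p^15*q^22 + p^15*q^24 + p^15*q^30 - p^15*q^37 - p^15*q^38 + p^16*q^4 + p^16*q^5 - p^16*q^6 + p^16*q^8 + p^16*q^10 - p^16*q^11 - p^16*q^12 + p^16*q^13 + p^16*q^14 - p^16*q^15 + p^16*q^16 + p^16*q^17 + p^16*q^19 - p^16*q^23 - p^16*q^29 + p^16*q^30 - p^16*q^31 + p^16*q^32 + p^16*q^36 + p^16*q^37 - p^16*q^39 + p^17*q^3 - p^17*q^4 + p^17*q^6 + p^17*q^7 - p^17*q^12 - p^17*q^13 - p^17*q^15 + p^17*q^16 + p^17*q^19 + p^17*q^20 - p^17*q^22 - p^17*q^23 + p^17*q^27 + p^17*q^28 - p^17*q^29 + p^17*q^30 + p^17*q^32 + p^17*q^38 - p^18*q^2 + p^18*q^5 + p^18*q^10 + p^18*q^11 + p^18*q^12 + p^18*q^13 - p^18*q^18 - p^18*q^19 + p^18*q^21 + p^18*q^28 -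 p^18*q^29 + p^18*q^34 - p^18*q^37 - p^19*q + p^19*q^2 + p^19*q^4 + p^19*q^5 + p^19*q^7 - p^19*q^8 - p^19*q^12 - p^19*q^15 + p^19*q^16 + p^19*q^17 - p^19*q^18 - p^19*q^25 + p^19*q^29 + p^19*q^33 + p^19*q^34 + p^19*q^36 + p^20 - p^20*q + p^20*q^2 + p^20*q^3 + p^20*q^4 + p^20*q^6 - p^20*q^7 - p^20*q^9 - p^20*q^10 + p^20*q^11 + p^20*q^15 + p^20*q^17 + p^20*q^20 - p^20*q^24 + p^20*q^26 + p^20*q^27 + p^20*q^28 - p^20*q^29 + p^20*q^32 - p^20*q^33 + p^20*q^35 - p^21*q + p^21*q^2 - p^21*q^7 + p^21*q^8 + p^21*q^9 + p^21*q^10 + p^21*q^18 + p^21*q^23 - p^21*q^26 + p^21*q^32 - p^21*q^34 - p^22*q - p^22*q^6 - p^22*q^7 - p^22*q^8 - p^22*q^9 + p^22*q^14 + p^22*q^15 - p^22*q^17 - p^22*q^24 + p^22*q^25 - p^22*q^30 + p^22*q^33 + p^22*q^38 + p^23 + p^23*q^3 - p^23*q^4 + p^23*q^5 - p^23*q^8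 - p^23*q^16 - p^23*q^17 + p^23*q^21 - p^23*q^24 + p^23*q^29 - p^23*q^30 - p^23*q^32 + p^24*q^4 + p^24*q^5 + p^24*q^6 + p^24*q^7 + p^24*q^13 + p^24*q^15 - p^24*q^20 - p^24*q^22 - p^24*q^23 + p^24*q^29 - p^24*q^31 - p^24*q^36 - p^24*q^37 + p^24*q^38 + p^24*q^39 + p^25*q^3 - p^25*q^4 - p^25*q^5 - p^25*q^6 - p^25*q^14 - p^25*q^19 + p^25*q^22 - p^25*q^28 + p^25*q^30 + p^25*q^37 - p^25*q^38 + p^26*q^2 + p^26*q^3 + p^26*q^4 + p^26*q^5 - p^26*q^10 - p^26*q^11 + p^26*q^13 + p^26*q^20 - p^26*q^21 + p^26*q^26 - p^26*q^29 - p^26*q^34 + p^26*q^37 - p^27*q - p^27*q^4 - p^27*q^12 + p^27*q^17 + p^27*q^20 + p^27*q^28 - p^27*q^36 + p^28*q^3 - p^28*q^4 - p^28*q^5 + p^28*q^6 + p^28*q^7 + p^28*q^8 - p^28*q^9 - p^28*q^11 + p^28*q^17 + p^28*q^18 + p^28*q^20 - p^28*q^25 + p^28*q^27 - p^28*q^32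 + p^28*q^33 - p^28*q^34 - p^28*q^35 - p^29*q^3 - p^29*q^4 + p^29*q^7 - p^29*q^8 - p^29*q^10 - p^29*q^11 - p^29*q^16 - p^29*q^17 - p^29*q^18 + p^29*q^19 - p^29*q^20 + p^29*q^23 + p^29*q^24 - p^29*q^26 + p^29*q^32 - p^29*q^33 + p^29*q^34 + p^29*q^39 - p^30*q - p^30*q^6 - p^30*q^9 + p^30*q^14 + p^30*q^15 + p^30*q^16 + p^30*q^17 - p^30*q^22 - p^30*q^23 + p^30*q^25 + p^30*q^30 + p^30*q^32 - p^30*q^33 + p^31 + p^31*q^8 - p^31*q^13 - p^31*q^16 - p^31*q^24 + p^31*q^32 + p^31*q^37 + p^32*q^2 + p^32*q^3 - p^32*q^4 - p^32*q^7 - p^32*q^8 + p^32*q^12 + p^32*q^16 + p^32*q^17 + p^32*q^20 + p^32*q^21 - p^32*q^23 - p^32*q^28 + p^32*q^29 + p^32*q^30 + p^32*q^31 + p^32*q^39 - p^33*q^6 - p^33*q^12 - p^33*q^13 + p^33*q^14 + p^33*q^19 - p^33*q^20 + p^33*q^22 + p^33*q^28 - p^33*q^29 - p^33*q^30 - p^33*q^35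 - p^33*q^38 + p^34*q^2 + p^34*q^5 - p^34*q^10 - p^34*q^11 - p^34*q^12 - p^34*q^13 + p^34*q^18 + p^34*q^19 - p^34*q^21 - p^34*q^26 - p^34*q^28 + p^34*q^29 + p^34*q^37 - p^35*q^4 + p^35*q^9 + p^35*q^12 + p^35*q^20 - p^35*q^28 - p^35*q^33 - p^35*q^36 - p^36 - p^36*q^3 + p^36*q^11 + p^36*q^16 + p^36*q^19 - p^36*q^24 - p^36*q^27 - p^36*q^35 + p^37*q^2 + p^37*q^8 + p^37*q^9 - p^37*q^10 - p^37*q^15 + p^37*q^16 - p^37*q^18 - p^37*q^24 + p^37*q^25 + p^37*q^26 + p^37*q^31 + p^37*q^34 - p^38*q + p^38*q^6 + p^38*q^7 + p^38*q^8 + p^38*q^9 - p^38*q^14 - p^38*q^15 + p^38*q^17 + p^38*q^22 + p^38*q^24 - p^38*q^25 - p^38*q^33 - p^38*q^38 + p^39 - p^39*q^5 - p^39*q^8 - p^39*q^16 + p^39*q^24 + p^39*q^29 + p^39*q^32) * hE - (q^3 - q^11 - q^13 - 2*q^16 - q^19 + q^21 + 2*q^24 + q^27 + q^32 + q^35 -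 q^37 - 2*q^40 - q^48 - p*q^2 + p*q^7 - 2*p*q^8 - 2*p*q^9 + 2*p*q^10 + p*q^11 + p*q^12 - p*q^13 + p*q^15 - p*q^16 + p*q^18 + 2*p*q^21 + 2*p*q^22 - p*q^23 + 2*p*q^24 - p*q^25 - p*q^26 - p*q^28 - p*q^31 - p*q^34 - p*q^36 + p*q^44 + p*q^47 + p^2*q - p^2*q^6 - 2*p^2*q^7 - 2*p^2*q^8 - p^2*q^9 + p^2*q^11 - p^2*q^12 - p^2*q^14 - p^2*q^17 + p^2*q^19 - p^2*q^22 + p^2*q^23 - 2*p^2*q^24 + p^2*q^25 + p^2*q^33 + p^2*q^35 + p^2*q^36 + p^2*q^38 + p^2*q^43 - p^2*q^46 - p^2*q^51 - p^3 + p^3*q^8 - p^3*q^10 + p^3*q^16 + p^3*q^19 + p^3*q^20 - p^3*q^24 - p^3*q^26 - p^3*q^27 - p^3*q^29 - p^3*q^32 + p^3*q^34 + p^3*q^36 + p^3*q^42 + p^3*q^45 + p^4*q^4 + p^4*q^12 - p^4*q^17 - p^4*q^20 - p^4*q^28 + p^4*q^36 + p^4*q^41 + p^5*q^6 + p^5*q^7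 - p^5*q^8 - p^5*q^11 - p^5*q^12 + p^5*q^16 + p^5*q^20 + p^5*q^21 + p^5*q^24 + p^5*q^25 - p^5*q^27 - p^5*q^32 + p^5*q^33 + p^5*q^34 + p^5*q^35 + p^5*q^43 - p^6*q^10 - p^6*q^16 - p^6*q^17 + p^6*q^18 + p^6*q^23 - p^6*q^24 + p^6*q^26 + p^6*q^32 - p^6*q^33 - p^6*q^34 - p^6*q^39 - p^6*q^42 + p^7*q^6 + p^7*q^9 - p^7*q^14 - p^7*q^15 - p^7*q^16 - p^7*q^17 + p^7*q^22 + p^7*q^23 - p^7*q^25 - p^7*q^30 - p^7*q^32 + p^7*q^33 + p^7*q^41 - p^8*q^8 + p^8*q^13 + p^8*q^16 + p^8*q^24 - p^8*q^32 - p^8*q^37 - p^8*q^40 - p^9*q^4 - p^9*q^7 + p^9*q^15 + p^9*q^20 + p^9*q^23 - p^9*q^28 - p^9*q^31 - p^9*q^39 + p^10*q^6 + p^10*q^12 + p^10*q^13 - p^10*q^14 - p^10*q^19 + p^10*q^20 - p^10*q^22 - p^10*q^28 + p^10*q^29 + p^10*q^30 + p^10*q^35 + p^10*q^38 - p^11*q^5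 + p^11*q^10 + p^11*q^11 + p^11*q^12 + p^11*q^13 - p^11*q^18 - p^11*q^19 + p^11*q^21 + p^11*q^26 + p^11*q^28 - p^11*q^29 - p^11*q^37 - p^11*q^42 + p^12*q^4 - p^12*q^9 - p^12*q^12 - p^12*q^20 + p^12*q^28 + p^12*q^33 + p^12*q^36) * hp - (-2 - q^3 - q^8 + p*q^2 + p*q^4 + p*q^7 - p^2*q + p^2*q^3 - p^2*q^6 - p^2*q^11 + p^3 + p^3*q^2 + p^3*q^5 + p^4*q + p^4*q^4 - p^4*q^9 + p^4*q^12 + p^5*q^3 - p^5*q^11 - 2*p^6*q^2 + p^6*q^5 + p^6*q^7 + p^6*q^10 + 2*p^7*q - 2*p^7*q^2 + p^7*q^5 - p^7*q^9 - p^8 - 2*p^8*q - 2*p^8*q^2 + p^8*q^3 - p^8*q^5 - p^8*q^8 - 2*p^9*q - p^9*q^2 + p^9*q^7 - p^9*q^12 + 2*p^10*q - p^10*q^3 - p^10*q^6 + p^10*q^11 - p^11 + p^11*q - p^11*q^5 + p^11*q^11 + p^12*q - p^12*q^2 + p^12*q^4 - p^12*q^5 + p^12*q^10 + p^12*q^11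 - p^12*q^12 - p^13 - p^13*q + p^13*q^8 + p^13*q^10 + p^13*q^11 - p^14*q^2 - p^14*q^7 - p^14*q^10 + p^15*q - p^15*q^7 + p^15*q^9 - 2*p^16 - p^16*q + p^16*q^3 + p^16*q^5 - p^16*q^6 - p^16*q^7 + p^16*q^8 - p^17*q^2 - p^17*q^4 - p^17*q^6 - p^17*q^7 + p^18*q + p^18*q^6 - p^18*q^11 - p^19 + p^19*q^2 + p^19*q^3 - p^19*q^10 - p^19*q^11 + p^20*q^3 - p^20*q^4 + p^20*q^5 + p^20*q^9 + p^20*q^10 - p^20*q^12 + p^21 + 2*p^21*q + p^21*q^5 + p^21*q^11 + 2*p^22*q - p^22*q^2 + p^22*q^7 - p^22*q^10 - p^23*q + p^23*q^2 + p^23*q^6 + p^23*q^7 + p^23*q^9 + 2*p^24 + 2*p^24*q - 2*p^24*q^2 - p^24*q^3 + p^24*q^5 - p^24*q^6 + p^24*q^8 - p^25*q + p^25*q^2 + p^25*q^5 - p^25*q^7 - p^26*q - p^26*q^3 + p^26*q^6 + p^26*q^11 + p^27 - p^27*q^3 - p^27*q^5 - p^28*q - p^28*q^4 - p^28*q^9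 - p^28*q^10 + p^28*q^11 + p^28*q^12 - p^29*q^3 + p^29*q^10 - p^29*q^11 - p^30*q^7 + p^30*q^10 - p^31*q - p^31*q^9 + p^32 - p^32*q^3 - p^32*q^5 + p^32*q^6 - p^32*q^7 - p^32*q^8 + p^33*q^2 + p^33*q^5 - p^33*q^6 + p^33*q^7 + p^33*q^12 - p^34*q + p^34*q^3 + p^34*q^5 - p^34*q^6 + p^35 + p^35*q^2 + p^35*q^5 + p^35*q^10 - p^36*q + p^36*q^2 + p^36*q^3 + p^36*q^4 + p^36*q^12 - p^37 - p^37*q^8 - p^37*q^11 + p^38*q^2 + p^38*q^10 - p^39*q^6 - p^39*q^9) * hq - (-1 + p*q^7 - p*q^8 - p*q^9 + p*q^10 + p*q^21 + p*q^22 + p*q^24 - p^2*q^7 - p^2*q^8 + p^2*q^19 - p^2*q^24 - p^3*q^21 - p^3*q^24 - p^3*q^26 - p^3*q^27 - p^3*q^29 - p^3*q^32 + p^4*q^12 - p^4*q^17 - 2*p^4*q^20 - p^4*q^23 - p^4*q^25 - p^4*q^28 + p^4*q^29 + p^4*q^33 + 2*p^4*q^36 + p^5*q^6 - p^5*q^11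 - p^5*q^14 - p^5*q^19 + p^5*q^21 + p^5*q^29 + p^6*q^5 + p^6*q^7 - p^6*q^16 - p^6*q^19 - p^6*q^21 - p^6*q^24 + p^7*q - p^7*q^2 + p^7*q^6 - p^7*q^17 - p^7*q^20 + p^7*q^22 - p^7*q^28 - p^7*q^32 + p^7*q^33 + p^7*q^36 - p^8*q - p^8*q^2 - p^8*q^19 + p^8*q^23 + p^8*q^27 + p^8*q^33 - p^8*q^38 - p^9*q - p^9*q^10 - p^9*q^16 + p^9*q^23 + p^9*q^29 + p^9*q^32 - p^9*q^38 + p^10*q - p^10*q^9 + p^10*q^11 - p^10*q^17 - p^10*q^19 + 2*p^10*q^30 + p^10*q^33 - p^11*q^5 + p^11*q^10 + 2*p^11*q^11 + p^11*q^14 - p^11*q^18 - p^11*q^19 + p^11*q^20 - p^11*q^24 + p^11*q^26 + p^11*q^30 + p^11*q^32 + p^12*q^4 + p^12*q^23 + p^12*q^28 + p^12*q^29 + p^12*q^34 - p^12*q^36 + p^13*q^34 - p^14*q^5 + p^14*q^11 - p^14*q^16 - p^14*q^23 - p^14*q^24 + p^14*q^29 - p^15*q^22 + p^15*q^38 - p^16*q^6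 - p^16*q^9 - p^16*q^14 + 2*p^16*q^16 - p^16*q^18 + p^16*q^19 - p^16*q^20 + p^16*q^27 - p^17*q^4 - p^17*q^7 - p^17*q^10 - p^17*q^21 + p^17*q^23 - p^17*q^32 - p^17*q^36 - p^18*q^11 - p^18*q^16 + p^18*q^23 - p^18*q^32 + p^19*q^2 - p^19*q^5 - p^19*q^6 - p^19*q^8 - p^19*q^10 - p^19*q^11 + p^19*q^16 + 2*p^19*q^19 - p^19*q^20 - p^19*q^30 - p^19*q^34 - 2*p^20*q^4 - p^20*q^7 + p^20*q^11 - p^20*q^16 - p^20*q^19 + p^20*q^23 - p^20*q^24 - 2*p^20*q^36 + p^21*q - p^21*q^3 + p^21*q^5 - p^21*q^6 - p^21*q^17 - p^21*q^26 - p^21*q^27 - p^21*q^28 + p^21*q^29 - p^21*q^36 + p^22*q + p^22*q^7 - p^22*q^15 + p^22*q^25 - p^22*q^32 - p^23*q^4 + p^23*q^8 + p^23*q^9 + p^23*q^12 - p^23*q^14 + p^23*q^17 + p^23*q^18 + p^23*q^20 - p^23*q^33 - p^23*q^38 + p^24*q - p^24*q^2 - p^24*q^3 - p^24*q^6 - p^24*q^11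 - p^24*q^14 - p^24*q^20 + 2*p^24*q^24 - p^25*q^4 + p^25*q^22 + p^25*q^36 - p^25*q^38 - p^26*q^3 + p^26*q^11 - p^26*q^21 + p^26*q^28 - p^26*q^37 - p^27*q^3 + p^27*q^8 + p^27*q^16 - p^27*q^21 - p^27*q^29 + p^27*q^34 - p^28*q^4 - p^28*q^7 + p^28*q^12 - p^28*q^21 + p^28*q^26 + p^28*q^36 - p^29*q^3 + p^29*q^4 + p^29*q^5 + p^29*q^9 + p^29*q^12 + p^29*q^14 + p^29*q^21 - p^29*q^27 - p^29*q^33 + p^29*q^34 + 2*p^30*q^10 + p^30*q^11 - p^30*q^19 - p^32*q^3 - p^32*q^7 + p^32*q^9 + p^32*q^11 - p^32*q^17 - p^32*q^18 - p^32*q^22 + p^33*q^4 + p^33*q^7 + p^33*q^8 + p^33*q^10 - p^33*q^23 - p^33*q^29 + p^33*q^36 + p^34*q^12 + p^34*q^13 - p^34*q^19 + p^34*q^27 + p^34*q^29 + 2*p^36*q^4 + p^36*q^7 - p^36*q^12 - p^36*q^17 - 2*p^36*q^20 - p^36*q^21 + p^36*q^25 + p^36*q^28 + p^36*q^33 - p^37*q^26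 - p^38*q^8 - p^38*q^9 + p^38*q^15 - p^38*q^23 - p^38*q^25) * h3
  exact one_ne_zero h1

/-- The trinomial `x^36 + 2x^10 + 2x^4` is planar over `F_{3^4}`. -/
theorem trinomial_planar_dim4 :
    ∀ a : GaloisField 3 4, a ≠ 0 →
      Function.Bijective
        (fun x : GaloisField 3 4 =>
          ((x + a) ^ 36 + 2 * (x + a) ^ 10 + 2 * (x + a) ^ 4)
            - (x ^ 36 + 2 * x ^ 10 + 2 * x ^ 4)) := by
  intro a ha
  rw [← Finite.injective_iff_bijective]
  intro x y hxy
  by_contra hne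
  have h : ((x + a) ^ 36 + 2 * (x + a) ^ 10 + 2 * (x + a) ^ 4)
            - (x ^ 36 + 2 * x ^ 10 + 2 * x ^ 4)
      = ((y + a) ^ 36 + 2 * (y + a) ^ 10 + 2 * (y + a) ^ 4)
            - (y ^ 36 + 2 * y ^ 10 + 2 * y ^ 4) := hxy
  have h3c : (3 : GaloisField 3 4) = 0 := by
    exact_mod_cast CharP.cast_eq_zero (GaloisField 3 4) 3
  have expand : ∀ u : GaloisField 3 4,
      (u+a)^36 + 2*(u+a)^10 + 2*(u+a)^4 - (u^36 + 2*u^10 + 2*u^4)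
        = (a^36 + 2*a^10 + 2*a^4)
          + (a^9*u^27 + a^27*u^9 + 2*a*u^9 + 2*a^9*u + 2*a*u^3 + 2*a^3*u) := by
    intro u
    have e3 : (u+a)^3 = u^3+a^3 := add_pow_char u a 3
    have e9 : (u+a)^9 = u^9+a^9 := by
      have := add_pow_char_pow u a 3 2
      norm_num at this
      exact this
    have e27 : (u+a)^27 = u^27+a^27 := by
      have := add_pow_char_pow u a 3 3
      norm_num at this
      exact this
    calc (u+a)^36 + 2*(u+a)^10 + 2*(u+a)^4 - (u^36 + 2*u^10 + 2*u^4)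
        = (u+a)^27*(u+a)^9 + 2*((u+a)^9*(u+a)) + 2*((u+a)^3*(u+a))
            - (u^36 + 2*u^10 + 2*u^4) := by ring
      _ = (u^27+a^27)*(u^9+a^9) + 2*((u^9+a^9)*(u+a)) + 2*((u^3+a^3)*(u+a))
            - (u^36 + 2*u^10 + 2*u^4) := by rw [e3, e9, e27]
      _ = _ := by ring
  rw [expand x, expand y] at h
  have hB : a^9*x^27 + a^27*x^9 + 2*a*x^9 + 2*a^9*x + 2*a*x^3 + 2*a^3*x
      = a^9*y^27 + a^27*y^9 + 2*a*y^9 + 2*a^9*y + 2*a*y^3 + 2*a^3*y :=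
    add_left_cancel h
  have s3 : (x-y)^3 = x^3 - y^3 := sub_pow_char (p := 3) x y
  have s9 : (x-y)^9 = x^9 - y^9 := by
    have := sub_pow_char_pow (p := 3) x y 2
    norm_num at this
    exact this
  have s27 : (x-y)^27 = x^27 - y^27 := by
    have := sub_pow_char_pow (p := 3) x y 3
    norm_num at this
    exact this
  have hE : a^9*(x-y)^27 + a^27*(x-y)^9 + 2*a*(x-y)^9 + 2*a^9*(x-y)
      + 2*a*(x-y)^3 + 2*a^3*(x-y) = 0 := by
    linear_combination hB + a^9*s27 + (a^27 + 2*a)*s9 + 2*a*s3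
  have hz : x - y ≠ 0 := sub_ne_zero_of_ne hne
  have hprod : ((x-y)*a) * (((x-y)^2)^13*(a^2)^4 + ((x-y)^2)^4*(a^2)^13
      - ((x-y)^2)^4 - (a^2)^4 - (x-y)^2 - a^2) = 0 := by
    linear_combination hE - (a*(x-y)^9 + a^9*(x-y) + a*(x-y)^3 + a^3*(x-y))*h3c
  have hE' : ((x-y)^2)^13*(a^2)^4 + ((x-y)^2)^4*(a^2)^13
      - ((x-y)^2)^4 - (a^2)^4 - (x-y)^2 - a^2 = 0 := by
    rcases mul_eq_zero.mp hprod with h' | h'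
    · exact absurd h' (mul_ne_zero hz ha)
    · exact h'
  haveI : Fintype (GaloisField 3 4) := Fintype.ofFinite _
  have hcard : Fintype.card (GaloisField 3 4) = 81 := by
    rw [← Nat.card_eq_fintype_card, GaloisField.card 3 4 (by norm_num)]
    norm_num
  have pow80 : ∀ w : GaloisField 3 4, w ≠ 0 → (w^2)^40 = 1 := by
    intro w hw
    have h80 : w ^ 80 = 1 := by
      have := FiniteField.pow_card_sub_one_eq_one w hw
      rw [hcard] at this
      norm_num at this
      exact this
    calc (w^2)^40 = w^80 := by rw [← pow_mul]
      _ = 1 := h80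
  exact aux_cert ((x-y)^2) (a^2) hE' (pow80 _ hz) (pow80 _ ha)
end

section
/- Let n ≥ 5 be odd and a ∈ F_{3^n} nonzero. Then F(x) = x^{10} + a x^6 − a^2 x^2 is planar over F_{3^n}. -/
/-- The Ten-Six-Two family: for odd `n ≥ 5` and nonzero `a`,
`x^10 + a x^6 - a^2 x^2` is planar over `F_{3^n}`. -/
theorem TST_planar (n : ℕ) (hn : 5 ≤ n) (hodd : Odd n)
    (a : GaloisField 3 n) (ha : a ≠ 0) :
    ∀ b : GaloisField 3 n, b ≠ 0 →
      Function.Bijective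
        (fun x : GaloisField 3 n =>
          ((x + b) ^ 10 + a * (x + b) ^ 6 - a ^ 2 * (x + b) ^ 2)
            - (x ^ 10 + a * x ^ 6 - a ^ 2 * x ^ 2)) := by
  intro b hb
  have h3 : (3 : GaloisField 3 n) = 0 := by
    exact_mod_cast CharP.cast_eq_zero (GaloisField 3 n) 3
  -- -1 is not a square since 3^n ≡ 3 mod 4 for odd n
  haveI : Fintype (GaloisField 3 n) := Fintype.ofFinite _
  have hns : ¬ IsSquare (-1 : GaloisField 3 n) := by
    rw [FiniteField.isSquare_neg_one_iff]
    have hcard : Fintype.card (GaloisField 3 n) = 3 ^ n := by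
      rw [← Nat.card_eq_fintype_card]
      exact GaloisField.card 3 n (by omega)
    rw [hcard]
    obtain ⟨k, hk⟩ := hodd
    subst hk
    simp only [ne_eq, not_not]
    rw [pow_succ, pow_mul, Nat.mul_mod, Nat.pow_mod]
    norm_num
  have frob : ∀ u v : GaloisField 3 n, (u + v) ^ 3 = u ^ 3 + v ^ 3 :=
    fun u v => add_pow_char u v 3
  -- key expansion of the difference function
  have key : ∀ x : GaloisField 3 n,
      ((x + b) ^ 10 + a * (x + b) ^ 6 - a ^ 2 * (x + b) ^ 2)
        - (x ^ 10 + a * x ^ 6 - a ^ 2 * x ^ 2)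
      = b * x ^ 9 - a * b ^ 3 * x ^ 3 + (b ^ 9 + a ^ 2 * b) * x
        + (b ^ 10 + a * b ^ 6 - a ^ 2 * b ^ 2) := by
    intro x
    have e10 : (x + b) ^ 10 = (x ^ 9 + b ^ 9) * (x + b) := by
      calc (x + b) ^ 10 = ((x + b) ^ 3) ^ 3 * (x + b) := by ring
        _ = ((x ^ 3 + b ^ 3) ^ 3) * (x + b) := by rw [frob]
        _ = ((x ^ 3) ^ 3 + (b ^ 3) ^ 3) * (x + b) := by rw [frob]
        _ = (x ^ 9 + b ^ 9) * (x + b) := by ring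
    have e6 : (x + b) ^ 6 = (x ^ 3 + b ^ 3) ^ 2 := by
      calc (x + b) ^ 6 = ((x + b) ^ 3) ^ 2 := by ring
        _ = (x ^ 3 + b ^ 3) ^ 2 := by rw [frob]
    rw [e10, e6]
    linear_combination (a * x ^ 3 * b ^ 3 - a ^ 2 * x * b) * h3
  apply Finite.injective_iff_bijective.mp
  intro x y h
  simp only [key] at h
  -- the kernel equation for z = x - y
  set z := x - y with hzdef
  have s3 : (x - y) ^ 3 = x ^ 3 - y ^ 3 := sub_pow_char _ _
  have s9 : (x - y) ^ 9 = x ^ 9 - y ^ 9 := by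
    calc (x - y) ^ 9 = ((x - y) ^ 3) ^ 3 := by ring
      _ = (x ^ 3 - y ^ 3) ^ 3 := by rw [s3]
      _ = (x ^ 3) ^ 3 - (y ^ 3) ^ 3 := sub_pow_char _ _
      _ = x ^ 9 - y ^ 9 := by ring
  have hz : b * z ^ 9 - a * b ^ 3 * z ^ 3 + (b ^ 9 + a ^ 2 * b) * z = 0 := by
    rw [hzdef, s9, s3]
    linear_combination h
  -- show z = 0
  by_contra hxy
  have hzne : z ≠ 0 := sub_ne_zero.mpr hxy
  have hfac : z ^ 8 - a * b ^ 2 * z ^ 2 + (b ^ 8 + a ^ 2) = 0 := by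
    have : b * z * (z ^ 8 - a * b ^ 2 * z ^ 2 + (b ^ 8 + a ^ 2)) = 0 := by
      linear_combination hz
    rcases mul_eq_zero.mp this with h' | h'
    · exact absurd (mul_eq_zero.mp h') (by push_neg; exact ⟨hb, hzne⟩)
    · exact h'
  have hsq : (a + b ^ 2 * z ^ 2) ^ 2 = -((z ^ 4 + b ^ 4) ^ 2) := by
    linear_combination hfac + (a * b ^ 2 * z ^ 2 + z ^ 4 * b ^ 4) * h3
  by_cases hw : z ^ 4 + b ^ 4 = 0
  · -- then (z²/b²)² = -1
    apply hns
    refine ⟨z ^ 2 / b ^ 2, ?_⟩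
    have hb4 : (b : GaloisField 3 n) ^ 2 ≠ 0 := pow_ne_zero _ hb
    field_simp
    linear_combination -hw
  · apply hns
    refine ⟨(a + b ^ 2 * z ^ 2) / (z ^ 4 + b ^ 4), ?_⟩
    field_simp
    linear_combination -hsq
end
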